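/- arXiv:1108.4958 — 2 statements merged into one kernel-verified Lean document; each statement's English description precedes it below -/
import Mathlib

section
/- Fix w ∈ S_∞. Define A = {(v,α) ∈ S_∞ × Φ^+ : v ≤_L w and α ∈ B_v} and B = {(u,α) ∈ S_∞ × Φ^+ : u ≤_L w s_α and α ∈ B_w}. Then the map (v,α) ↦ (v s_α, α) is a well-defined bijection from A to B. In particular, for (v,α) ∈ A one has v s_α ≤_L w s_α and ℓ(w s_α) = ℓ(w) + 1 - ⟨α^∨, 2ρ⟩. -/
open scoped BigOperators

noncomputable section

/-- Variable names for the ambient polynomial ring `ℤ[x;q;a]`: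
`Var.x i` denotes the variable `x_{i+1}`, `Var.q i` denotes `q_{i+1}`,
and `Var.a i` denotes `a_{i+1}` (so that there are no spurious variables). -/
inductive Var : Type
  | x : ℕ → Var
  | q : ℕ → Var
  | a : ℕ → Var
  deriving DecidableEq

/-- The ambient polynomial ring `ℤ[x;q;a]` in the variables
`x₁,x₂,…; q₁,q₂,…; a₁,a₂,…`. -/
abbrev R : Type := MvPolynomial Var ℤ

/-- The fraction field of `R`. -/
abbrev F : Type := FractionRing R

/-- The variable `x_i` (for `i ≥ 1`). -/
def Xx (i : ℕ) : R := MvPolynomial.X (Var.x (i - 1))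
/-- The variable `q_i` (for `i ≥ 1`). -/
def Qq (i : ℕ) : R := MvPolynomial.X (Var.q (i - 1))
/-- The variable `a_i` (for `i ≥ 1`). -/
def Aa (i : ℕ) : R := MvPolynomial.X (Var.a (i - 1))

def toF : R →+* F := algebraMap R F

/-- The ring automorphism `sᵢᵃ` of `R` exchanging the variables `a_i` and `a_{i+1}`
(meaningful for `i ≥ 1`). -/
def swapA (i : ℕ) : R ≃+* R :=
  (MvPolynomial.renameEquiv ℤ (Equiv.swap (Var.a (i - 1)) (Var.a i))).toRingEquiv

/-- The extension of `sᵢᵃ` to the fraction field. -/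
def swapAF (i : ℕ) : F ≃+* F := IsFractionRing.ringEquivOfRingEquiv (swapA i)

/-- The divided difference operator `∂ᵢᵃ = (aᵢ - aᵢ₊₁)⁻¹(1 - sᵢᵃ)` in the `a`-variables. -/
def dd (i : ℕ) (f : F) : F := (f - swapAF i f) / (toF (Aa i) - toF (Aa (i + 1)))

/-- Iterated divided differences along a word (the head of the list acting last), so that
`ddWord [i₁, …, i_ℓ] = ∂_{i₁} ∘ ⋯ ∘ ∂_{i_ℓ}`. -/
def ddWord : List ℕ → F → F
  | [], f => f
  | i :: l, f => dd i (ddWord l f)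

abbrev Perm : Type := Equiv.Perm ℕ

/-- The simple transposition `sᵢ = (i, i+1)` (meaningful for `i ≥ 1`). -/
def sTrans (i : ℕ) : Perm := Equiv.swap i (i + 1)

/-- The transposition `(i, j)`; for `1 ≤ i < j` this is the reflection `s_{α_{ij}}`. -/
def transp (i j : ℕ) : Perm := Equiv.swap i j

/-- The number of inversions (the Coxeter length `ℓ`) of a permutation. -/
def len (w : Perm) : ℕ := Set.ncard {p : ℕ × ℕ | p.1 < p.2 ∧ w p.2 < w p.1}

/-- `w` lies in `S_n`: it permutes `{1,…,n}`, fixing `0` and all `i > n`. -/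
def InSn (n : ℕ) (w : Perm) : Prop := w 0 = 0 ∧ ∀ i, n < i → w i = i

/-- `w` lies in `S_∞ = ⋃ₙ Sₙ`. -/
def InSinf (w : Perm) : Prop := ∃ n, InSn n w

/-- `l` is a reduced word for `w`: `w = s_{i₁} ⋯ s_{i_ℓ}` with `ℓ = ℓ(w)`,
all letters being `≥ 1`. -/
def IsReducedWord (w : Perm) (l : List ℕ) : Prop :=
  (∀ i ∈ l, 1 ≤ i) ∧ w = (l.map sTrans).prod ∧ l.length = len w

/-- The longest element `w₀⁽ⁿ⁾` of `S_n`, i.e. `i ↦ n+1-i` on `{1,…,n}`. -/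
def w0 (n : ℕ) : Perm :=
  Function.Involutive.toPerm (fun i => if 1 ≤ i ∧ i ≤ n then n + 1 - i else i)
    (by intro i; dsimp only; split_ifs <;> omega)

/-- The left weak order on `S_∞`: `v ≤_L w` iff `ℓ(w v⁻¹) + ℓ(v) = ℓ(w)`. -/
def LeftWeakLe (v w : Perm) : Prop :=
  InSinf v ∧ InSinf w ∧ len (w * v⁻¹) + len v = len w

/-- The code of a permutation: `code w i = #{j > i : w j < w i}`. -/
def code (w : Perm) (i : ℕ) : ℕ := Set.ncard {j : ℕ | i < j ∧ w j < w i}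

/-- The set `B_v` of positive roots `α = α_{ab}` (encoded as pairs `(a,b)`, `1 ≤ a < b`)
with `ℓ(v s_α) = ℓ(v) + 1 - ⟨α^∨, 2ρ⟩`, where `⟨α_{ab}^∨, 2ρ⟩ = 2(b - a)`. -/
def Bset (v : Perm) : Set (ℕ × ℕ) :=
  {α | 1 ≤ α.1 ∧ α.1 < α.2 ∧
    (len (v * transp α.1 α.2) : ℤ) = (len v : ℤ) + 1 - 2 * ((α.2 : ℤ) - (α.1 : ℤ))}

namespace QCaux

open Finset

lemma insn_apply_lt {n N : ℕ} {w : Perm} (h : InSn n w) (hn : n < N) {i : ℕ}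
    (hi : i < N) : w i < N := by
  by_contra hc
  push_neg at hc
  have h1 : w (w i) = w i := h.2 _ (by omega)
  have h2 := w.injective h1
  omega

lemma insn_mul {n m : ℕ} {u v : Perm} (hu : InSn n u) (hv : InSn m v) :
    InSn (max n m) (u * v) := by
  constructor
  · simp [Equiv.Perm.mul_apply, hv.1, hu.1]
  · intro i hi
    simp only [Equiv.Perm.mul_apply]
    rw [hv.2 i (by omega), hu.2 i (by omega)]

lemma insn_inv {n : ℕ} {w : Perm} (h : InSn n w) : InSn n w⁻¹ := by
  constructor
  · rw [Equiv.Perm.inv_eq_iff_eq, h.1]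
  · intro i hi; rw [Equiv.Perm.inv_eq_iff_eq, h.2 i hi]

lemma insn_transp {a b : ℕ} (ha : 1 ≤ a) (hab : a < b) : InSn b (transp a b) := by
  constructor
  · exact Equiv.swap_apply_of_ne_of_ne (by omega) (by omega)
  · intro i hi; exact Equiv.swap_apply_of_ne_of_ne (by omega) (by omega)

lemma insinf_mul {u v : Perm} (hu : InSinf u) (hv : InSinf v) : InSinf (u * v) := by
  obtain ⟨n, hn⟩ := hu; obtain ⟨m, hm⟩ := hv; exact ⟨_, insn_mul hn hm⟩

lemma insinf_inv {w : Perm} (h : InSinf w) : InSinf w⁻¹ := by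
  obtain ⟨n, hn⟩ := h; exact ⟨n, insn_inv hn⟩

lemma insinf_transp {a b : ℕ} (ha : 1 ≤ a) (hab : a < b) : InSinf (transp a b) :=
  ⟨b, insn_transp ha hab⟩

/-- bounded inversion set -/
def finInv (N : ℕ) (w : Perm) : Finset (ℕ × ℕ) :=
  ((Finset.range N) ×ˢ (Finset.range N)).filter fun p => p.1 < p.2 ∧ w p.2 < w p.1

lemma mem_finInv {N : ℕ} {w : Perm} {p : ℕ × ℕ} :
    p ∈ finInv N w ↔ p.1 < N ∧ p.2 < N ∧ p.1 < p.2 ∧ w p.2 < w p.1 := by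
  simp [finInv, and_assoc]

lemma inv_bound {n N : ℕ} {w : Perm} (h : InSn n w) (hn : n < N) {i j : ℕ}
    (hij : i < j) (hw : w j < w i) : i < N ∧ j < N := by
  have hjN : j < N := by
    by_contra hc
    push_neg at hc
    have hj : w j = j := h.2 j (by omega)
    have h1 : w (w i) = w i := h.2 _ (by omega)
    have h2 := w.injective h1
    omega
  exact ⟨by omega, hjN⟩

lemma len_eq_card {n N : ℕ} {w : Perm} (h : InSn n w) (hn : n < N) :
    len w = (finInv N w).card := by
  have hset : {p : ℕ × ℕ | p.1 < p.2 ∧ w p.2 < w p.1} = ↑(finInv N w) := by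
    ext ⟨i, j⟩
    simp only [Set.mem_setOf_eq, Finset.mem_coe, mem_finInv]
    constructor
    · rintro ⟨hij, hwij⟩
      obtain ⟨h1, h2⟩ := inv_bound h hn hij hwij
      exact ⟨h1, h2, hij, hwij⟩
    · tauto
  rw [len, hset, Set.ncard_coe_finset]

def PF (N : ℕ) : Finset (ℕ × ℕ) :=
  ((Finset.range N) ×ˢ (Finset.range N)).filter fun p => p.1 < p.2

lemma mem_PF {N : ℕ} {p : ℕ × ℕ} : p ∈ PF N ↔ p.1 < N ∧ p.2 < N ∧ p.1 < p.2 := by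
  simp [PF, and_assoc]

/-- The fundamental length formula. -/
lemma formula {nu nv N : ℕ} {u v : Perm} (hu : InSn nu u) (hv : InSn nv v)
    (hNu : nu < N) (hNv : nv < N) :
    (len (u * v) : ℤ) = len u + len v -
      2 * ((PF N).filter fun p => v p.2 < v p.1 ∧ u (v p.1) < u (v p.2)).card := by
  classical
  have huv : InSn (max nu nv) (u * v) := insn_mul hu hv
  set A1 : Finset (ℕ × ℕ) :=
    (PF N).filter (fun p => v p.2 < v p.1 ∧ u (v p.2) < u (v p.1)) with hA1
  set A2 : Finset (ℕ × ℕ) :=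
    (PF N).filter (fun p => v p.2 < v p.1 ∧ u (v p.1) < u (v p.2)) with hA2
  set A3 : Finset (ℕ × ℕ) :=
    (PF N).filter (fun p => v p.1 < v p.2 ∧ u (v p.2) < u (v p.1)) with hA3
  -- split of Inv v
  have hv_split : A1.card + A2.card = (finInv N v).card := by
    have := Finset.card_filter_add_card_filter_not
      (s := finInv N v) (p := fun p => u (v p.2) < u (v p.1))
    rw [← this]
    congr 1
    · apply congrArg
      ext p
      simp only [hA1, Finset.mem_filter, mem_finInv, mem_PF]
      tauto
    · apply congrArg
      ext p
      simp only [hA2, Finset.mem_filter, mem_finInv, mem_PF]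
      have hne : p.1 < p.2 → u (v p.1) ≠ u (v p.2) := fun hp h =>
        absurd (v.injective (u.injective h)) (by omega)
      constructor
      · rintro ⟨⟨h1, h2, h3⟩, h4, h5⟩
        exact ⟨⟨h1, h2, h3, h4⟩, by have := hne h3; omega⟩
      · rintro ⟨⟨h1, h2, h3, h4⟩, h5⟩
        exact ⟨⟨h1, h2, h3⟩, h4, by have := hne h3; omega⟩
  -- split of Inv (u*v)
  have huv_split : A1.card + A3.card = (finInv N (u * v)).card := by
    have := Finset.card_filter_add_card_filter_not
      (s := finInv N (u * v)) (p := fun p => v p.2 < v p.1)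
    rw [← this]
    congr 1
    · apply congrArg
      ext p
      simp only [hA1, Finset.mem_filter, mem_finInv, mem_PF, Equiv.Perm.mul_apply]
      tauto
    · apply congrArg
      ext p
      simp only [hA3, Finset.mem_filter, mem_finInv, mem_PF, Equiv.Perm.mul_apply]
      have hne : p.1 < p.2 → v p.1 ≠ v p.2 := fun hp h =>
        absurd (v.injective h) (by omega)
      constructor
      · rintro ⟨⟨h1, h2, h3⟩, h4, h5⟩
        exact ⟨⟨h1, h2, h3, h5⟩, by have := hne h3; omega⟩
      · rintro ⟨⟨h1, h2, h3, h4⟩, h5⟩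
        exact ⟨⟨h1, h2, h3⟩, by have := hne h3; omega, h4⟩
  -- Inv u via bijection
  have hu_card : (finInv N u).card = A2.card + A3.card := by
    rw [← Finset.card_union_of_disjoint]
    · apply Finset.card_bij'
        (i := fun q _ => if v⁻¹ q.1 < v⁻¹ q.2 then (v⁻¹ q.1, v⁻¹ q.2) else (v⁻¹ q.2, v⁻¹ q.1))
        (j := fun p _ => if v p.1 < v p.2 then (v p.1, v p.2) else (v p.2, v p.1))
      · intro q hq
        rw [mem_finInv] at hq
        obtain ⟨hq1, hq2, hq3, hq4⟩ := hq
        have hb1 : v⁻¹ q.1 < N := insn_apply_lt (insn_inv hv) hNv hq1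
        have hb2 : v⁻¹ q.2 < N := insn_apply_lt (insn_inv hv) hNv hq2
        have e1 : v (v⁻¹ q.1) = q.1 := v.apply_symm_apply q.1
        have e2 : v (v⁻¹ q.2) = q.2 := v.apply_symm_apply q.2
        have hne : v⁻¹ q.1 ≠ v⁻¹ q.2 := by
          intro h; rw [← e1, ← e2, h] at hq3; omega
        rw [Finset.mem_union]
        split_ifs with hlt
        · right
          rw [hA3, Finset.mem_filter, mem_PF]
          exact ⟨⟨hb1, hb2, hlt⟩, by rw [e1, e2]; exact hq3, by rw [e1, e2]; exact hq4⟩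
        · left
          rw [hA2, Finset.mem_filter, mem_PF]
          exact ⟨⟨hb2, hb1, by omega⟩, by rw [e1, e2]; exact hq3, by rw [e1, e2]; exact hq4⟩
      · intro p hp
        rw [Finset.mem_union] at hp
        rcases hp with hp | hp
        · rw [hA2, Finset.mem_filter, mem_PF] at hp
          obtain ⟨⟨h1, h2, h3⟩, h4, h5⟩ := hp
          rw [if_neg (by omega), mem_finInv]
          exact ⟨insn_apply_lt hv hNv h2, insn_apply_lt hv hNv h1, h4, h5⟩
        · rw [hA3, Finset.mem_filter, mem_PF] at hp
          obtain ⟨⟨h1, h2, h3⟩, h4, h5⟩ := hp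
          rw [if_pos h4, mem_finInv]
          exact ⟨insn_apply_lt hv hNv h1, insn_apply_lt hv hNv h2, h4, h5⟩
      · intro q hq
        rw [mem_finInv] at hq
        have e1 : v (v⁻¹ q.1) = q.1 := v.apply_symm_apply q.1
        have e2 : v (v⁻¹ q.2) = q.2 := v.apply_symm_apply q.2
        split_ifs with h1 h2 h3 <;> simp only [e1, e2] at * <;> first | rfl | omega
      · intro p hp
        rw [Finset.mem_union, hA2, hA3, Finset.mem_filter, Finset.mem_filter, mem_PF] at hp
        have e1 : v⁻¹ (v p.1) = p.1 := v.symm_apply_apply p.1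
        have e2 : v⁻¹ (v p.2) = p.2 := v.symm_apply_apply p.2
        split_ifs with h1 h2 h3 <;> simp only [e1, e2] at * <;> first | rfl | omega
    · rw [Finset.disjoint_left]
      intro p hp hp'
      rw [hA2, Finset.mem_filter] at hp
      rw [hA3, Finset.mem_filter] at hp'
      omega
  have l1 : len u = (finInv N u).card := len_eq_card hu hNu
  have l2 : len v = (finInv N v).card := len_eq_card hv hNv
  have l3 : len (u * v) = (finInv N (u * v)).card := len_eq_card huv (by omega)
  rw [l1, l2, l3]
  push_cast
  omega

def SubInv (v w : Perm) : Prop := ∀ i j : ℕ, i < j → v j < v i → w j < w i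

/-- Length additivity iff inversion containment. -/
lemma add_iff {u v : Perm} (hu : InSinf u) (hv : InSinf v) :
    len (u * v) = len u + len v ↔ SubInv v (u * v) := by
  classical
  obtain ⟨nu, hnu⟩ := hu
  obtain ⟨nv, hnv⟩ := hv
  set N := max nu nv + 1 with hN
  have hform := formula (N := N) hnu hnv (by omega) (by omega)
  constructor
  · intro hlen i j hij hv'
    have hcard : ((PF N).filter fun p => v p.2 < v p.1 ∧ u (v p.1) < u (v p.2)).card = 0 := by
      omega
    rw [Finset.card_eq_zero] at hcard
    by_contra hc
    have hne : (u * v) i ≠ (u * v) j := fun h =>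
      absurd ((u * v).injective h) (by omega)
    have hlt : u (v i) < u (v j) := by
      simp only [Equiv.Perm.mul_apply] at hc hne
      omega
    obtain ⟨b1, b2⟩ := inv_bound hnv (show nv < N by omega) hij hv'
    have : (i, j) ∈ ((PF N).filter fun p => v p.2 < v p.1 ∧ u (v p.1) < u (v p.2)) := by
      rw [Finset.mem_filter, mem_PF]
      exact ⟨⟨b1, b2, hij⟩, hv', hlt⟩
    rw [hcard] at this
    exact absurd this (Finset.notMem_empty _)
  · intro hsub
    have hcard : ((PF N).filter fun p => v p.2 < v p.1 ∧ u (v p.1) < u (v p.2)).card = 0 := by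
      rw [Finset.card_eq_zero, Finset.filter_eq_empty_iff]
      intro p hp
      rw [mem_PF] at hp
      rintro ⟨h1, h2⟩
      have := hsub p.1 p.2 hp.2.2 h1
      simp only [Equiv.Perm.mul_apply] at this
      omega
    omega

lemma transp_left (a b : ℕ) : transp a b a = b := Equiv.swap_apply_left a b
lemma transp_right (a b : ℕ) : transp a b b = a := Equiv.swap_apply_right a b
lemma transp_other {a b x : ℕ} (h1 : x ≠ a) (h2 : x ≠ b) : transp a b x = x :=
  Equiv.swap_apply_of_ne_of_ne h1 h2

lemma mem_finInv_transp {a b N : ℕ} (hab : a < b) (hbN : b < N) {i j : ℕ} :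
    (i, j) ∈ finInv N (transp a b) ↔
      ((i = a ∧ a < j ∧ j ≤ b) ∨ (a < i ∧ i < b ∧ j = b)) := by
  rw [mem_finInv]
  show i < N ∧ j < N ∧ i < j ∧ Equiv.swap a b j < Equiv.swap a b i ↔ _
  rw [Equiv.swap_apply_def, Equiv.swap_apply_def]
  split_ifs <;> omega

lemma finInv_transp {a b N : ℕ} (hab : a < b) (hbN : b < N) :
    finInv N (transp a b) =
      ((Finset.Ioc a b).image fun c => (a, c)) ∪ ((Finset.Ioo a b).image fun c => (c, b)) := by
  ext ⟨i, j⟩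
  rw [mem_finInv_transp hab hbN]
  simp only [Finset.mem_union, Finset.mem_image, Finset.mem_Ioc, Finset.mem_Ioo, Prod.mk.injEq]
  constructor
  · rintro (⟨rfl, h1, h2⟩ | ⟨h1, h2, rfl⟩)
    · exact Or.inl ⟨j, ⟨h1, h2⟩, rfl, rfl⟩
    · exact Or.inr ⟨i, ⟨h1, h2⟩, rfl, rfl⟩
  · rintro (⟨c, hc, rfl, rfl⟩ | ⟨c, hc, rfl, rfl⟩) <;> omega

lemma len_transp {a b : ℕ} (ha : 1 ≤ a) (hab : a < b) :
    len (transp a b) = 2 * (b - a) - 1 := by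
  rw [len_eq_card (insn_transp ha hab) (show b < b + 1 by omega),
    finInv_transp hab (by omega), Finset.card_union_of_disjoint, Finset.card_image_of_injective,
    Finset.card_image_of_injective, Nat.card_Ioc, Nat.card_Ioo]
  · omega
  · intro x y h; exact ((Prod.mk.injEq _ _ _ _).mp h).1
  · intro x y h; exact ((Prod.mk.injEq _ _ _ _).mp h).2
  · rw [Finset.disjoint_left]
    rintro p hp hp'
    simp only [Finset.mem_image, Finset.mem_Ioc, Finset.mem_Ioo] at hp hp'
    obtain ⟨c, hc, rfl⟩ := hp
    obtain ⟨c', hc', h⟩ := hp'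
    rw [Prod.mk.injEq] at h
    omega

lemma bset_core {v : Perm} {n : ℕ} (hn : InSn n v) {a b : ℕ} (ha : 1 ≤ a) (hab : a < b) :
    ((len (v * transp a b) : ℤ) = (len v : ℤ) + 1 - 2 * ((b : ℤ) - (a : ℤ))) ↔
      (v b < v a ∧ ∀ c, a < c → c < b → v b < v c ∧ v c < v a) := by
  classical
  set N := max n b + 1 with hN
  have ht : InSn b (transp a b) := insn_transp ha hab
  have hform := formula (N := N) hn ht (by omega) (by omega)
  rw [len_transp ha hab] at hform
  set A2 := (PF N).filter
    (fun p => transp a b p.2 < transp a b p.1 ∧ v (transp a b p.1) < v (transp a b p.2)) with hA2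
  have hsub : A2 ⊆ finInv N (transp a b) := by
    intro p hp
    rw [hA2, Finset.mem_filter, mem_PF] at hp
    rw [mem_finInv]
    exact ⟨hp.1.1, hp.1.2.1, hp.1.2.2, hp.2.1⟩
  have hTcard : (finInv N (transp a b)).card = 2 * (b - a) - 1 := by
    rw [← len_eq_card ht (by omega), len_transp ha hab]
  have hbN : b < N := by omega
  constructor
  · intro heq
    have hcard : A2.card = 2 * (b - a) - 1 := by omega
    have hA2eq : A2 = finInv N (transp a b) :=
      Finset.eq_of_subset_of_card_le hsub (by omega)
    have hmem : ∀ i j : ℕ, ((i = a ∧ a < j ∧ j ≤ b) ∨ (a < i ∧ i < b ∧ j = b)) →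
        v (transp a b i) < v (transp a b j) := by
      intro i j hij
      have hm : (i, j) ∈ A2 := by rw [hA2eq, mem_finInv_transp hab hbN]; exact hij
      rw [hA2, Finset.mem_filter] at hm
      exact hm.2.2
    constructor
    · have hx := hmem a b (Or.inl ⟨rfl, hab, le_refl b⟩)
      rwa [transp_left, transp_right] at hx
    · intro c hc1 hc2
      constructor
      · have hx := hmem a c (Or.inl ⟨rfl, hc1, by omega⟩)
        rwa [transp_left, transp_other (by omega) (by omega)] at hx
      · have hx := hmem c b (Or.inr ⟨hc1, hc2, rfl⟩)
        rwa [transp_right, transp_other (by omega) (by omega)] at hx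
  · rintro ⟨h1, h2⟩
    have hA2eq : A2 = finInv N (transp a b) := by
      apply Finset.Subset.antisymm hsub
      rintro ⟨i, j⟩ hp
      rw [mem_finInv_transp hab hbN] at hp
      rw [hA2, Finset.mem_filter, mem_PF]
      rcases hp with ⟨rfl, hj1, hj2⟩ | ⟨hi1, hi2, rfl⟩
      · by_cases hjb : j = b
        · subst hjb
          refine ⟨⟨by omega, by omega, hab⟩, ?_, ?_⟩
          · rw [transp_left, transp_right]; omega
          · rw [transp_left, transp_right]; exact h1
        · refine ⟨⟨by omega, by omega, hj1⟩, ?_, ?_⟩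
          · rw [transp_left, transp_other (by omega) hjb]; omega
          · rw [transp_left, transp_other (by omega) hjb]
            exact (h2 j hj1 (by omega)).1
      · refine ⟨⟨by omega, by omega, hi2⟩, ?_, ?_⟩
        · rw [transp_right, transp_other (by omega) (by omega)]; omega
        · rw [transp_right, transp_other (by omega) (by omega)]
          exact (h2 i hi1 hi2).2
    have hcard : A2.card = 2 * (b - a) - 1 := by rw [hA2eq, hTcard]
    omega

/-- Characterization of membership in `Bset`. -/
lemma bset_char {v : Perm} (hv : InSinf v) (a b : ℕ) :
    (a, b) ∈ Bset v ↔
      (1 ≤ a ∧ a < b ∧ v b < v a ∧ ∀ c, a < c → c < b → v b < v c ∧ v c < v a) := by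
  obtain ⟨n, hn⟩ := hv
  simp only [Bset, Set.mem_setOf_eq]
  constructor
  · rintro ⟨ha, hab, heq⟩
    exact ⟨ha, hab, (bset_core hn ha hab).mp heq⟩
  · rintro ⟨ha, hab, hrest⟩
    exact ⟨ha, hab, (bset_core hn ha hab).mpr hrest⟩

lemma subinv_1 {v w : Perm} {a b : ℕ} (hab : a < b)
    (hvb : v b < v a) (hvc : ∀ c, a < c → c < b → v b < v c ∧ v c < v a)
    (hsub : SubInv v w) : SubInv (v * transp a b) (w * transp a b) := by
  intro i j hij hlt
  simp only [Equiv.Perm.mul_apply] at hlt ⊢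
  have htlt : transp a b i < transp a b j := by
    rcases lt_trichotomy (transp a b i) (transp a b j) with h | h | h
    · exact h
    · exact absurd ((transp a b).injective h) (by omega)
    · exfalso
      by_cases h1 : i = a
      · by_cases h2 : j = b
        · rw [h1, h2, transp_left, transp_right] at hlt
          omega
        · have hja : j ≠ a := by omega
          rw [h1, transp_left, transp_other hja h2] at hlt h
          have := (hvc j (by omega) (by omega)).1
          omega
      · by_cases h1' : i = b
        · have hja : j ≠ a := by omega
          have hjb : j ≠ b := by omega
          rw [h1', transp_right, transp_other hja hjb] at h
          omega
        · rw [transp_other h1 h1'] at h hlt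
          by_cases h2 : j = a
          · rw [h2, transp_left] at h; omega
          · by_cases h2' : j = b
            · rw [h2', transp_right] at h hlt
              have := (hvc i (by omega) (by omega)).2
              omega
            · rw [transp_other h2 h2'] at h; omega
  exact hsub _ _ htlt hlt

lemma subinv_2 {v w : Perm} {a b : ℕ} (hab : a < b)
    (hvb : v b < v a) (hvc : ∀ c, a < c → c < b → v b < v c ∧ v c < v a)
    (hwb : w b < w a) (hwc : ∀ c, a < c → c < b → w b < w c ∧ w c < w a)
    (hsub : SubInv (v * transp a b) (w * transp a b)) : SubInv v w := by
  intro i j hij hlt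
  rcases lt_trichotomy (transp a b i) (transp a b j) with h | h | h
  · have hres := hsub (transp a b i) (transp a b j) h
      (by simp only [Equiv.Perm.mul_apply, Equiv.swap_apply_self, transp]; exact hlt)
    simpa only [Equiv.Perm.mul_apply, Equiv.swap_apply_self, transp] using hres
  · exact absurd ((transp a b).injective h) (by omega)
  · by_cases h1 : i = a
    · by_cases h2 : j = b
      · rw [h1, h2]; exact hwb
      · have hja : j ≠ a := by omega
        rw [h1, transp_left, transp_other hja h2] at h
        rw [h1]
        exact (hwc j (by omega) (by omega)).2
    · by_cases h1' : i = b
      · have hja : j ≠ a := by omega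
        have hjb : j ≠ b := by omega
        rw [h1', transp_right, transp_other hja hjb] at h
        omega
      · rw [transp_other h1 h1'] at h
        by_cases h2 : j = a
        · rw [h2, transp_left] at h; omega
        · by_cases h2' : j = b
          · rw [h2', transp_right] at h
            rw [h2']
            exact (hwc i (by omega) (by omega)).1
          · rw [transp_other h2 h2'] at h; omega

lemma transp_sq (a b : ℕ) : transp a b * transp a b = 1 := Equiv.swap_mul_self a b

lemma transp_inv (a b : ℕ) : (transp a b)⁻¹ = transp a b := Equiv.swap_inv a b

/-- Forward direction: well-definedness. -/
lemma main1 {w : Perm} {v : Perm} {a b : ℕ} (hLW : LeftWeakLe v w) (hB : (a, b) ∈ Bset v) :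
    LeftWeakLe (v * transp a b) (w * transp a b) ∧ (a, b) ∈ Bset w := by
  obtain ⟨hvinf, hwinf, hlen⟩ := hLW
  obtain ⟨ha, hab, hvb, hvc⟩ := (bset_char hvinf a b).mp hB
  have hws : (w * v⁻¹) * v = w := by group
  have hsub : SubInv v w := by
    have h := (add_iff (insinf_mul hwinf (insinf_inv hvinf)) hvinf).mp
      (by rw [hws]; omega)
    rwa [hws] at h
  have hwb : w b < w a := hsub a b hab hvb
  have hwc : ∀ c, a < c → c < b → w b < w c ∧ w c < w a := fun c h1 h2 =>
    ⟨hsub c b h2 (hvc c h1 h2).1, hsub a c h1 (hvc c h1 h2).2⟩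
  have hBw : (a, b) ∈ Bset w := (bset_char hwinf a b).mpr ⟨ha, hab, hwb, hwc⟩
  refine ⟨⟨insinf_mul hvinf (insinf_transp ha hab),
    insinf_mul hwinf (insinf_transp ha hab), ?_⟩, hBw⟩
  have hq : (w * transp a b) * (v * transp a b)⁻¹ = w * v⁻¹ := by group
  have heq2 : (w * v⁻¹) * (v * transp a b) = w * transp a b := by group
  have hsub2 : SubInv (v * transp a b) ((w * v⁻¹) * (v * transp a b)) := by
    rw [heq2]; exact subinv_1 hab hvb hvc hsub
  have hadd := (add_iff (insinf_mul hwinf (insinf_inv hvinf))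
    (insinf_mul hvinf (insinf_transp ha hab))).mpr hsub2
  rw [heq2] at hadd
  rw [hq]
  omega

/-- Backward direction: surjectivity data. -/
lemma main2 {w : Perm} (hwinf : InSinf w) {u : Perm} {a b : ℕ}
    (hB : (a, b) ∈ Bset w) (hLW : LeftWeakLe u (w * transp a b)) :
    LeftWeakLe (u * transp a b) w ∧ (a, b) ∈ Bset (u * transp a b) := by
  obtain ⟨huinf, hwtinf, hlen⟩ := hLW
  obtain ⟨ha, hab, hwb, hwc⟩ := (bset_char hwinf a b).mp hB
  have htinf : InSinf (transp a b) := insinf_transp ha hab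
  have hutinf : InSinf (u * transp a b) := insinf_mul huinf htinf
  have hws : (w * transp a b * u⁻¹) * u = w * transp a b := by group
  have hsub : SubInv u (w * transp a b) := by
    have h := (add_iff (insinf_mul hwtinf (insinf_inv huinf)) huinf).mp
      (by rw [hws]; omega)
    rwa [hws] at h
  -- value characterization of u on {a,..,b}
  have huab : u a < u b := by
    by_contra hc
    have hne : u a ≠ u b := fun h => absurd (u.injective h) (by omega)
    have h := hsub a b hab (by omega)
    simp only [Equiv.Perm.mul_apply] at h
    rw [transp_left, transp_right] at h
    omega
  have huc : ∀ c, a < c → c < b → u a < u c ∧ u c < u b := by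
    intro c h1 h2
    constructor
    · by_contra hc
      have hne : u a ≠ u c := fun h => absurd (u.injective h) (by omega)
      have h := hsub a c h1 (by omega)
      simp only [Equiv.Perm.mul_apply] at h
      rw [transp_left, transp_other (by omega) (by omega)] at h
      have := hwc c h1 h2
      omega
    · by_contra hc
      have hne : u c ≠ u b := fun h => absurd (u.injective h) (by omega)
      have h := hsub c b h2 (by omega)
      simp only [Equiv.Perm.mul_apply] at h
      rw [transp_right, transp_other (by omega) (by omega)] at h
      have := hwc c h1 h2
      omega
  -- characterization of v := u * t
  have hvb : (u * transp a b) b < (u * transp a b) a := by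
    simp only [Equiv.Perm.mul_apply, transp_left, transp_right]; exact huab
  have hvc : ∀ c, a < c → c < b →
      (u * transp a b) b < (u * transp a b) c ∧ (u * transp a b) c < (u * transp a b) a := by
    intro c h1 h2
    simp only [Equiv.Perm.mul_apply, transp_left, transp_right,
      transp_other (show c ≠ a by omega) (show c ≠ b by omega)]
    exact (huc c h1 h2)
  have hBut : (a, b) ∈ Bset (u * transp a b) :=
    (bset_char hutinf a b).mpr ⟨ha, hab, hvb, hvc⟩
  have hutt : (u * transp a b) * transp a b = u := by
    rw [mul_assoc, transp_sq, mul_one]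
  have hsub2 : SubInv ((u * transp a b) * transp a b) (w * transp a b) := by
    rw [hutt]; exact hsub
  have hsubv : SubInv (u * transp a b) w :=
    subinv_2 hab hvb hvc hwb hwc hsub2
  refine ⟨⟨hutinf, hwinf, ?_⟩, hBut⟩
  have hq : w * (u * transp a b)⁻¹ = w * transp a b * u⁻¹ := by
    rw [mul_inv_rev, transp_inv]; group
  have hUV : (w * transp a b * u⁻¹) * (u * transp a b) = w := by
    have h1 : (w * transp a b * u⁻¹) * (u * transp a b) = w * (transp a b * transp a b) := by
      group
    rw [h1, transp_sq, mul_one]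
  have hsub3 : SubInv (u * transp a b) ((w * transp a b * u⁻¹) * (u * transp a b)) := by
    rw [hUV]; exact hsubv
  have hadd := (add_iff (insinf_mul hwtinf (insinf_inv huinf)) hutinf).mpr hsub3
  rw [hUV] at hadd
  rw [hq]
  omega

end QCaux

/-- for fixed `w ∈ S_∞`, with
`A = {(v,α) : v ≤_L w, α ∈ B_v}` and `B = {(u,α) : u ≤_L w s_α, α ∈ B_w}`,
the map `(v,α) ↦ (v s_α, α)` is a well-defined bijection from `A` to `B`; in particular,
for `(v,α) ∈ A` one has `v s_α ≤_L w s_α` and `ℓ(w s_α) = ℓ(w) + 1 - ⟨α^∨, 2ρ⟩`. -/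
theorem quantum_correction_bijection (w : Perm) (hw : InSinf w) :
    Set.BijOn (fun p : Perm × (ℕ × ℕ) => (p.1 * transp p.2.1 p.2.2, p.2))
      {p : Perm × (ℕ × ℕ) | LeftWeakLe p.1 w ∧ p.2 ∈ Bset p.1}
      {p : Perm × (ℕ × ℕ) | LeftWeakLe p.1 (w * transp p.2.1 p.2.2) ∧ p.2 ∈ Bset w} ∧
    ∀ p : Perm × (ℕ × ℕ), (LeftWeakLe p.1 w ∧ p.2 ∈ Bset p.1) →
      (LeftWeakLe (p.1 * transp p.2.1 p.2.2) (w * transp p.2.1 p.2.2) ∧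
        (len (w * transp p.2.1 p.2.2) : ℤ) =
          (len w : ℤ) + 1 - 2 * ((p.2.2 : ℤ) - (p.2.1 : ℤ))) := by
  constructor
  · refine ⟨?_, ?_, ?_⟩
    · rintro ⟨v, a, b⟩ ⟨h1, h2⟩
      exact QCaux.main1 h1 h2
    · rintro ⟨v, a, b⟩ _ ⟨v', a', b'⟩ _ heq
      rw [Prod.mk.injEq] at heq
      obtain ⟨heq1, heq2⟩ := heq
      rw [Prod.mk.injEq] at heq2
      obtain ⟨rfl, rfl⟩ : a = a' ∧ b = b' := by
        constructor <;> simp_all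
      rw [Prod.mk.injEq]
      exact ⟨mul_right_cancel heq1, rfl⟩
    · rintro ⟨u, a, b⟩ ⟨h1, h2⟩
      have hm := QCaux.main2 hw h2 h1
      refine ⟨(u * transp a b, (a, b)), ⟨hm.1, hm.2⟩, ?_⟩
      have huu : u * transp a b * transp a b = u := by
        rw [mul_assoc, QCaux.transp_sq, mul_one]
      simp [huu]
  · rintro ⟨v, a, b⟩ ⟨h1, h2⟩
    obtain ⟨hL, hBw⟩ := QCaux.main1 h1 h2
    refine ⟨hL, ?_⟩
    simp only [Bset, Set.mem_setOf_eq] at hBw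
    exact hBw.2.2
end
end

section
/- Let β = (β_1,...,β_n) ∈ Z_{≥0}^n satisfy β_i ≤ n-i for 2 ≤ i ≤ n. Then ∂_{n-1}^a ⋯ ∂_2^a ∂_1^a (a^β) = 0 if β_1 < n-1, and ∂_{n-1}^a ⋯ ∂_2^a ∂_1^a (a^β) = a_1^{β_2} a_2^{β_3} ⋯ a_{n-1}^{β_n} if β_1 = n-1, where a^β = a_1^{β_1} ⋯ a_n^{β_n}. -/
open scoped BigOperators

noncomputable section

section Helpers

variable {α : Type*}

lemma toF_apply (g : R) : toF g = algebraMap R F g := rfl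

lemma swapAF_toF (i : ℕ) (g : R) : swapAF i (toF g) = toF (swapA i g) :=
  IsFractionRing.ringEquivOfRingEquiv_algebraMap _ g

lemma swapA_apply (i : ℕ) (g : R) :
    swapA i g = MvPolynomial.rename (Equiv.swap (Var.a (i - 1)) (Var.a i)) g := rfl

lemma swapA_Aa_self (i : ℕ) : swapA i (Aa i) = Aa (i + 1) := by
  rw [swapA_apply, Aa, MvPolynomial.rename_X, Equiv.swap_apply_left]
  rfl

lemma swapA_Aa_succ (i : ℕ) : swapA i (Aa (i + 1)) = Aa i := by
  rw [swapA_apply, Aa, MvPolynomial.rename_X]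
  have : (i + 1 : ℕ) - 1 = i := by omega
  rw [this, Equiv.swap_apply_right]
  rfl

lemma swapA_Aa_of_ne (i j : ℕ) (hi : 1 ≤ i) (hj : 1 ≤ j) (h1 : j ≠ i) (h2 : j ≠ i + 1) :
    swapA i (Aa j) = Aa j := by
  rw [swapA_apply, Aa, MvPolynomial.rename_X, Equiv.swap_apply_of_ne_of_ne]
  · intro h; injection h with h'; omega
  · intro h; injection h with h'; omega

lemma Aa_ne (i : ℕ) (hi : 1 ≤ i) : Aa i ≠ Aa (i + 1) := by
  intro h
  have := MvPolynomial.X_injective (R := ℤ) h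
  injection this with h'; omega

lemma toF_injective : Function.Injective toF := IsFractionRing.injective R F

lemma denom_ne (i : ℕ) (hi : 1 ≤ i) : toF (Aa i) - toF (Aa (i + 1)) ≠ 0 := by
  rw [sub_ne_zero]
  exact fun h => Aa_ne i hi (toF_injective h)

lemma dd_toF_of_factor (i : ℕ) (hi : 1 ≤ i) (M N : R)
    (h : M - swapA i M = N * (Aa i - Aa (i + 1))) :
    dd i (toF M) = toF N := by
  unfold dd
  rw [swapAF_toF, ← map_sub, h, map_mul, map_sub, mul_div_assoc, div_self (denom_ne i hi),
    mul_one]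

lemma dd_zero (i : ℕ) : dd i (0 : F) = 0 := by simp [dd]

lemma dd_sum (i : ℕ) (s : Finset α) (f : α → F) :
    dd i (∑ t ∈ s, f t) = ∑ t ∈ s, dd i (f t) := by
  unfold dd
  rw [map_sum, ← Finset.sum_sub_distrib, Finset.sum_div]

lemma dd_sub (i : ℕ) (f g : F) : dd i (f - g) = dd i f - dd i g := by
  unfold dd
  rw [map_sub]
  ring

lemma dd_toF_mul (i : ℕ) (g : R) (hg : swapA i g = g) (f : F) :
    dd i (toF g * f) = toF g * dd i f := by
  unfold dd
  rw [map_mul, swapAF_toF, hg, ← mul_sub, mul_div_assoc]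

lemma ddWord_append (l1 l2 : List ℕ) (f : F) :
    ddWord (l1 ++ l2) f = ddWord l1 (ddWord l2 f) := by
  induction l1 with
  | nil => rfl
  | cons a l ih =>
      show dd a (ddWord (l ++ l2) f) = dd a (ddWord l (ddWord l2 f))
      rw [ih]

lemma ddWord_zero (l : List ℕ) : ddWord l (0 : F) = 0 := by
  induction l with
  | nil => rfl
  | cons a l ih => simp only [ddWord, ih, dd_zero]

lemma ddWord_sum (l : List ℕ) (s : Finset α) (f : α → F) :
    ddWord l (∑ t ∈ s, f t) = ∑ t ∈ s, ddWord l (f t) := by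
  induction l generalizing f with
  | nil => rfl
  | cons a l ih => simp only [ddWord, ih, dd_sum]

lemma ddWord_sub (l : List ℕ) (f g : F) : ddWord l (f - g) = ddWord l f - ddWord l g := by
  induction l generalizing f g with
  | nil => rfl
  | cons a l ih => simp only [ddWord, ih, dd_sub]

lemma ddWord_toF_mul (l : List ℕ) (g : R) (hg : ∀ j ∈ l, swapA j g = g) (f : F) :
    ddWord l (toF g * f) = toF g * ddWord l f := by
  induction l generalizing f with
  | nil => rfl
  | cons a l ih =>
      simp only [ddWord]
      rw [ih (fun j hj => hg j (List.mem_cons_of_mem a hj)),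
        dd_toF_mul a g (hg a (List.mem_cons_self))]

lemma prod_Icc_bot {M : Type*} [CommMonoid M] (f : ℕ → M) {a b : ℕ} (h : a ≤ b) :
    ∏ i ∈ Finset.Icc a b, f i = f a * ∏ i ∈ Finset.Icc (a + 1) b, f i := by
  rw [Finset.Icc_add_one_left_eq_Ioc, ← Finset.Ioc_insert_left h, Finset.prod_insert (by simp)]

lemma key_le {S : Type*} [CommRing S] (X Y : S) {p q : ℕ} (h : q ≤ p) :
    X ^ p * Y ^ q - X ^ q * Y ^ p =
      (∑ t ∈ Finset.range (p - q), X ^ (q + t) * Y ^ (p - 1 - t)) * (X - Y) := by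
  obtain ⟨d, rfl⟩ : ∃ d, p = q + d := ⟨p - q, by omega⟩
  have h1 : q + d - q = d := by omega
  rw [h1]
  have h2 : ∀ t ∈ Finset.range d, X ^ (q + t) * Y ^ (q + d - 1 - t)
      = (X ^ q * Y ^ q) * (X ^ t * Y ^ (d - 1 - t)) := by
    intro t ht
    rw [Finset.mem_range] at ht
    have : q + d - 1 - t = q + (d - 1 - t) := by omega
    rw [this, pow_add, pow_add]
    ring
  rw [Finset.sum_congr rfl h2, ← Finset.mul_sum, mul_assoc, geom_sum₂_mul, pow_add]
  ring

lemma key2 {S : Type*} [CommRing S] (X Y : S) (p q : ℕ) :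
    X ^ p * Y ^ q - X ^ q * Y ^ p =
      ((∑ t ∈ Finset.range (p - q), X ^ (q + t) * Y ^ (p - 1 - t))
        - ∑ t ∈ Finset.range (q - p), X ^ (p + t) * Y ^ (q - 1 - t)) * (X - Y) := by
  rcases le_total q p with h | h
  · have : q - p = 0 := by omega
    rw [this, Finset.range_zero, Finset.sum_empty, sub_zero, key_le X Y h]
  · have : p - q = 0 := by omega
    rw [this, Finset.range_zero, Finset.sum_empty, zero_sub, neg_mul, ← key_le X Y h]
    ring

end Helpers

lemma main_lemma (m : ℕ) : ∀ (k : ℕ), 1 ≤ k → ∀ (β : ℕ → ℕ),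
    (∀ i, k + 1 ≤ i → i ≤ k + m → β i ≤ k + m - i) →
    (β k < m →
      ddWord ((List.range m).map fun t => k + m - 1 - t)
        (toF (∏ i ∈ Finset.Icc k (k + m), Aa i ^ β i)) = 0) ∧
    (β k = m →
      ddWord ((List.range m).map fun t => k + m - 1 - t)
        (toF (∏ i ∈ Finset.Icc k (k + m), Aa i ^ β i)) =
      toF (∏ i ∈ Finset.Icc k (k + m - 1), Aa i ^ β (i + 1))) := by
  induction m with
  | zero =>
      intro k hk β hβ
      refine ⟨fun h => absurd h (by omega), fun h => ?_⟩
      simp only [List.range_zero, List.map_nil, Nat.add_zero]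
      show toF (∏ i ∈ Finset.Icc k (k + 0), Aa i ^ β i)
          = toF (∏ i ∈ Finset.Icc k (k + 0 - 1), Aa i ^ β (i + 1))
      have h1 : Finset.Icc k (k + 0 - 1) = ∅ := Finset.Icc_eq_empty (by omega)
      have h2 : k + 0 = k := rfl
      rw [h1, Finset.prod_empty, h2, Finset.Icc_self, Finset.prod_singleton, h, pow_zero]
  | succ m ih =>
      intro k hk β hβ
      have hq : β (k + 1) ≤ m := by have := hβ (k + 1) (by omega) (by omega); omega
      -- word decomposition
      have hword : ((List.range (m + 1)).map fun t => k + (m + 1) - 1 - t)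
          = (((List.range m).map fun t => k + 1 + m - 1 - t) ++ [k]) := by
        have hfg : (fun t => k + (m + 1) - 1 - t) = fun t : ℕ => k + 1 + m - 1 - t := by
          funext t; omega
        rw [hfg, List.range_succ, List.map_append, List.map_singleton]
        congr 2
        omega
      have hWmem : ∀ j ∈ (List.range m).map fun t => k + 1 + m - 1 - t,
          k + 1 ≤ j ∧ j ≤ k + m := by
        intro j hj
        rw [List.mem_map] at hj
        obtain ⟨t, ht, rfl⟩ := hj
        rw [List.mem_range] at ht
        omega
      -- rest and its invariance
      have hrestinv : swapA k (∏ i ∈ Finset.Icc (k + 2) (k + m + 1), Aa i ^ β i)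
          = ∏ i ∈ Finset.Icc (k + 2) (k + m + 1), Aa i ^ β i := by
        rw [map_prod]
        refine Finset.prod_congr rfl fun i hi => ?_
        rw [Finset.mem_Icc] at hi
        rw [map_pow, swapA_Aa_of_ne k i hk (by omega) (by omega) (by omega)]
      -- split monomial
      have hsplit : (∏ i ∈ Finset.Icc k (k + (m + 1)), Aa i ^ β i)
          = Aa k ^ β k * (Aa (k + 1) ^ β (k + 1)
              * ∏ i ∈ Finset.Icc (k + 2) (k + m + 1), Aa i ^ β i) := by
        rw [prod_Icc_bot (fun i => Aa i ^ β i) (show k ≤ k + (m + 1) by omega),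
          prod_Icc_bot (fun i => Aa i ^ β i) (show k + 1 ≤ k + (m + 1) by omega)]
        rfl
      -- dd k of the monomial
      have hdd : dd k (toF (∏ i ∈ Finset.Icc k (k + (m + 1)), Aa i ^ β i))
          = toF (((∑ t ∈ Finset.range (β k - β (k + 1)),
                    Aa k ^ (β (k + 1) + t) * Aa (k + 1) ^ (β k - 1 - t))
                - ∑ t ∈ Finset.range (β (k + 1) - β k),
                    Aa k ^ (β k + t) * Aa (k + 1) ^ (β (k + 1) - 1 - t))
              * ∏ i ∈ Finset.Icc (k + 2) (k + m + 1), Aa i ^ β i) := by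
        apply dd_toF_of_factor k hk
        rw [hsplit, map_mul, map_mul, map_pow, map_pow, swapA_Aa_self, swapA_Aa_succ, hrestinv]
        linear_combination (∏ i ∈ Finset.Icc (k + 2) (k + m + 1), Aa i ^ β i)
          * key2 (Aa k) (Aa (k + 1)) (β k) (β (k + 1))
      have hexp : ((∑ t ∈ Finset.range (β k - β (k + 1)),
              Aa k ^ (β (k + 1) + t) * Aa (k + 1) ^ (β k - 1 - t))
            - ∑ t ∈ Finset.range (β (k + 1) - β k),
              Aa k ^ (β k + t) * Aa (k + 1) ^ (β (k + 1) - 1 - t))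
          * ∏ i ∈ Finset.Icc (k + 2) (k + m + 1), Aa i ^ β i
          = (∑ t ∈ Finset.range (β k - β (k + 1)), Aa k ^ (β (k + 1) + t)
              * (Aa (k + 1) ^ (β k - 1 - t) * ∏ i ∈ Finset.Icc (k + 2) (k + m + 1), Aa i ^ β i))
          - ∑ t ∈ Finset.range (β (k + 1) - β k), Aa k ^ (β k + t)
              * (Aa (k + 1) ^ (β (k + 1) - 1 - t)
                * ∏ i ∈ Finset.Icc (k + 2) (k + m + 1), Aa i ^ β i) := by
        rw [sub_mul, Finset.sum_mul, Finset.sum_mul]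
        simp only [mul_assoc]
      -- the key per-term evaluation
      have hterm : ∀ e : ℕ, e ≤ m →
          ddWord ((List.range m).map fun t => k + 1 + m - 1 - t)
            (toF (Aa (k + 1) ^ e * ∏ i ∈ Finset.Icc (k + 2) (k + m + 1), Aa i ^ β i))
          = if e = m then toF (∏ i ∈ Finset.Icc (k + 1) (k + m), Aa i ^ β (i + 1)) else 0 := by
        intro e he
        have hcon : ∀ i, (k + 1) + 1 ≤ i → i ≤ (k + 1) + m →
            Function.update β (k + 1) e i ≤ (k + 1) + m - i := by
          intro i h1 h2
          rw [Function.update_of_ne (by omega)]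
          have := hβ i (by omega) (by omega)
          omega
        have hIH := ih (k + 1) (by omega) (Function.update β (k + 1) e) hcon
        have hprodeq : (∏ i ∈ Finset.Icc (k + 1) (k + 1 + m),
              Aa i ^ (Function.update β (k + 1) e) i)
            = Aa (k + 1) ^ e * ∏ i ∈ Finset.Icc (k + 2) (k + m + 1), Aa i ^ β i := by
          rw [prod_Icc_bot _ (show k + 1 ≤ k + 1 + m by omega), Function.update_self]
          congr 1
          have hIcc : Finset.Icc (k + 1 + 1) (k + 1 + m) = Finset.Icc (k + 2) (k + m + 1) := by
            congr 1
            omega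
          rw [hIcc]
          refine Finset.prod_congr rfl fun i hi => ?_
          rw [Finset.mem_Icc] at hi
          rw [Function.update_of_ne (by omega)]
        rcases lt_or_eq_of_le he with hlt | rfl
        · rw [if_neg (by omega)]
          have h1 := hIH.1 (by rw [Function.update_self]; exact hlt)
          rw [hprodeq] at h1
          exact h1
        · rw [if_pos rfl]
          have h2 := hIH.2 (by rw [Function.update_self])
          rw [hprodeq] at h2
          rw [h2]
          congr 1
          have hIcc2 : Finset.Icc (k + 1) (k + 1 + e - 1) = Finset.Icc (k + 1) (k + e) := by
            congr 1
            omega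
          rw [hIcc2]
          refine Finset.prod_congr rfl fun i hi => ?_
          rw [Finset.mem_Icc] at hi
          rw [Function.update_of_ne (by omega)]
      -- invariance of powers of Aa k under the remaining word
      have hXinv : ∀ c : ℕ, ∀ j ∈ (List.range m).map fun t => k + 1 + m - 1 - t,
          swapA j (Aa k ^ c) = Aa k ^ c := by
        intro c j hj
        obtain ⟨hj1, hj2⟩ := hWmem j hj
        rw [map_pow, swapA_Aa_of_ne j k (by omega) (by omega) (by omega) (by omega)]
      constructor
      · -- vanishing case
        intro hlt
        rw [hword, ddWord_append]
        simp only [ddWord]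
        rw [hdd, hexp, map_sub, map_sum, map_sum, ddWord_sub, ddWord_sum, ddWord_sum]
        have hz1 : ∀ t ∈ Finset.range (β k - β (k + 1)),
            ddWord ((List.range m).map fun t => k + 1 + m - 1 - t)
              (toF (Aa k ^ (β (k + 1) + t) * (Aa (k + 1) ^ (β k - 1 - t)
                * ∏ i ∈ Finset.Icc (k + 2) (k + m + 1), Aa i ^ β i))) = 0 := by
          intro t ht
          rw [Finset.mem_range] at ht
          rw [map_mul, ddWord_toF_mul _ _ (hXinv _),
            hterm (β k - 1 - t) (by omega), if_neg (by omega), mul_zero]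
        have hz2 : ∀ t ∈ Finset.range (β (k + 1) - β k),
            ddWord ((List.range m).map fun t => k + 1 + m - 1 - t)
              (toF (Aa k ^ (β k + t) * (Aa (k + 1) ^ (β (k + 1) - 1 - t)
                * ∏ i ∈ Finset.Icc (k + 2) (k + m + 1), Aa i ^ β i))) = 0 := by
          intro t ht
          rw [Finset.mem_range] at ht
          rw [map_mul, ddWord_toF_mul _ _ (hXinv _),
            hterm (β (k + 1) - 1 - t) (by omega), if_neg (by omega), mul_zero]
        rw [Finset.sum_eq_zero hz1, Finset.sum_eq_zero hz2, sub_zero]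
      · -- main case
        intro heq
        rw [hword, ddWord_append]
        simp only [ddWord]
        rw [hdd, hexp, map_sub, map_sum, map_sum, ddWord_sub, ddWord_sum, ddWord_sum]
        rw [show β (k + 1) - β k = 0 by omega, Finset.range_zero, Finset.sum_empty, sub_zero]
        rw [Finset.sum_eq_single_of_mem 0 (Finset.mem_range.mpr (by omega)) ?_]
        · rw [show β k - 1 - 0 = m by omega, map_mul, ddWord_toF_mul _ _ (hXinv _),
            hterm m le_rfl, if_pos rfl, ← map_mul]
          congr 1
          rw [show k + (m + 1) - 1 = k + m by omega,
            prod_Icc_bot (fun i => Aa i ^ β (i + 1)) (show k ≤ k + m by omega),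
            show β (k + 1) + 0 = β (k + 1) by omega]
        · intro t ht hne
          rw [Finset.mem_range] at ht
          rw [map_mul, ddWord_toF_mul _ _ (hXinv _),
            hterm (β k - 1 - t) (by omega), if_neg (by omega), mul_zero]

/-- let `β = (β_1,…,β_n)` with `β_i ≤ n - i` for `2 ≤ i ≤ n`.  Then
`∂_{n-1}^a ⋯ ∂_2^a ∂_1^a (a^β) = 0` if `β_1 < n-1`, and
`∂_{n-1}^a ⋯ ∂_2^a ∂_1^a (a^β) = a_1^{β_2} a_2^{β_3} ⋯ a_{n-1}^{β_n}` if `β_1 = n-1`. -/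
theorem divided_difference_monomial (n : ℕ) (hn : 1 ≤ n) (β : ℕ → ℕ)
    (hβ : ∀ i, 2 ≤ i → i ≤ n → β i ≤ n - i) :
    (β 1 < n - 1 →
      ddWord ((List.range (n - 1)).map fun t => n - 1 - t)
        (toF (∏ i ∈ Finset.Icc 1 n, Aa i ^ β i)) = 0) ∧
    (β 1 = n - 1 →
      ddWord ((List.range (n - 1)).map fun t => n - 1 - t)
        (toF (∏ i ∈ Finset.Icc 1 n, Aa i ^ β i)) =
      toF (∏ i ∈ Finset.Icc 1 (n - 1), Aa i ^ β (i + 1))) := by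
  have H := main_lemma (n - 1) 1 le_rfl β ?_
  · have h2 : 1 + (n - 1) - 1 = n - 1 := by omega
    have h1 : 1 + (n - 1) = n := by omega
    rw [h2, h1] at H
    exact H
  · intro i h1i h2i
    have := hβ i h1i (by omega)
    omega
end
end
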